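/- Let Δ be a 2-dimensional Buchsbaum simplicial complex and F = {a,b,c} a 3-element set, and set Γ = Δ ∪ ⟨F⟩. If Δ ∩ ⟨F⟩ = ⟨{a,b},{a,c},{b,c}⟩, then Γ is Buchsbaum and h(Γ) = h(Δ) + (0,0,0,1). -/

import Mathlib

open Finset

noncomputable section

/-- `Δ` is a simplicial complex on `[n] = {1,…,n}`: a collection of subsets of `[n]`,
closed under taking subsets, containing every singleton `{i}` for `i ∈ [n]`. -/
def IsComplexOn (n : ℕ) (Δ : Finset (Finset ℕ)) : Prop :=
  (∀ F ∈ Δ, ∀ G ⊆ F, G ∈ Δ) ∧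
  (∀ F ∈ Δ, ∀ i ∈ F, i ∈ Finset.Icc 1 n) ∧
  (∀ i ∈ Finset.Icc 1 n, ({i} : Finset ℕ) ∈ Δ)

/-- a simplicial complex whose vertex set is contained in `[n]`:
a downward closed collection of subsets of `[n]`. -/
def IsComplexIn (n : ℕ) (Δ : Finset (Finset ℕ)) : Prop :=
  (∀ F ∈ Δ, ∀ G ⊆ F, G ∈ Δ) ∧ (∀ F ∈ Δ, ∀ i ∈ F, i ∈ Finset.Icc 1 n)

/-- the faces of `Δ` with `m` vertices -/
def facesOf (Δ : Finset (Finset ℕ)) (m : ℕ) : Finset (Finset ℕ) :=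
  Δ.filter fun F => F.card = m

/-- `fVec Δ j = f_{j-1}(Δ)`, the number of faces of `Δ` with `j` vertices;
by convention `f_{-1}(Δ) = 1`. -/
def fVec (Δ : Finset (Finset ℕ)) (j : ℕ) : ℤ :=
  if j = 0 then 1 else ((facesOf Δ j).card : ℤ)

/-- the `h`-vector of a `(d-1)`-dimensional complex, defined by
`∑ f_{i-1} (x-1)^{d-i} = ∑ h_i x^{d-i}`, i.e.
`h_i = ∑_{j=0}^{i} (-1)^{i-j} C(d-j, i-j) f_{j-1}`. -/
def hVec (d : ℕ) (Δ : Finset (Finset ℕ)) (i : ℕ) : ℤ :=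
  ∑ j ∈ Finset.range (i + 1),
    (-1 : ℤ) ^ (i - j) * ((d - j).choose (i - j) : ℤ) * fVec Δ j

/-- the dimension `max {k : f_k(Δ) ≠ 0}` of `Δ`, as an integer -/
def dimZ (Δ : Finset (Finset ℕ)) : ℤ := ((Δ.sup Finset.card : ℕ) : ℤ) - 1

/-- the link `lk_Δ(F) = {G : G ∩ F = ∅, G ∪ F ∈ Δ}` -/
def link (Δ : Finset (Finset ℕ)) (F : Finset ℕ) : Finset (Finset ℕ) :=
  Δ.filter fun G => Disjoint G F ∧ G ∪ F ∈ Δ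

variable (K : Type) [Field K]

/-- the simplicial boundary operator on formal `K`-linear combinations of
finite subsets of `ℕ` (vertices ordered by the order on `ℕ`):
`∂ F = ∑_{v ∈ F} (-1)^{#{u ∈ F : u < v}} (F \ {v})`. -/
def bdry : (Finset ℕ →₀ K) →ₗ[K] (Finset ℕ →₀ K) :=
  Finsupp.lsum K fun F => LinearMap.toSpanSingleton K (Finset ℕ →₀ K)
    (∑ v ∈ F, ((-1 : K) ^ ((F.filter fun u => u < v).card)) • Finsupp.single (F.erase v) (1 : K))

/-- the space of simplicial `K`-chains of `Δ` spanned by the faces with `m` vertices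
(for `m = 0` this is the span of the empty face, giving *reduced* homology) -/
def chains (Δ : Finset (Finset ℕ)) (m : ℕ) : Submodule K (Finset ℕ →₀ K) :=
  Submodule.span K ((fun F => Finsupp.single F (1 : K)) '' (facesOf Δ m : Set (Finset ℕ)))

/-- the dimension of the reduced homology of `Δ` at faces of cardinality `m`:
`dim (ker ∂ ∩ C_m) - dim (∂ C_{m+1})` -/
def homDim (Δ : Finset (Finset ℕ)) (m : ℕ) : ℕ :=
  Module.finrank K ↥(chains K Δ m ⊓ LinearMap.ker (bdry K))
    - Module.finrank K ↥((chains K Δ (m + 1)).map (bdry K))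

/-- the reduced Betti number `β_i(Δ; K) = dim_K H̃_i(Δ; K)` for `i : ℤ` -/
def betti (Δ : Finset (Finset ℕ)) (i : ℤ) : ℕ :=
  if 0 ≤ i + 1 then homDim K Δ (i + 1).toNat else 0

/-- all facets (maximal faces) of `Δ` have the same cardinality -/
def IsPure (Δ : Finset (Finset ℕ)) : Prop :=
  ∀ F ∈ Δ, (∀ G ∈ Δ, F ⊆ G → F = G) → F.card = Δ.sup Finset.card

/-- `Δ` is Cohen–Macaulay (over `K`): for every face `F ∈ Δ` (including `∅`),
`β_i(lk_Δ(F)) = 0` for all `i ≠ dim Δ - |F|`. -/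
def IsCohenMacaulay (Δ : Finset (Finset ℕ)) : Prop :=
  ∀ F ∈ Δ, ∀ i : ℤ, i ≠ dimZ Δ - F.card → betti K (link Δ F) i = 0

/-- `Δ` is Buchsbaum (over `K`): `Δ` is pure and the link of every vertex is
Cohen–Macaulay. -/
def IsBuchsbaum (Δ : Finset (Finset ℕ)) : Prop :=
  IsPure Δ ∧ ∀ v : ℕ, ({v} : Finset ℕ) ∈ Δ → IsCohenMacaulay K (link Δ {v})

/-- `Δ` is connected: any two vertices are joined by a path of edges of `Δ` -/
def IsConnectedComplex (Δ : Finset (Finset ℕ)) : Prop :=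
  ∀ u v : ℕ, ({u} : Finset ℕ) ∈ Δ → ({v} : Finset ℕ) ∈ Δ →
    Relation.ReflTransGen (fun a b : ℕ => a ≠ b ∧ ({a, b} : Finset ℕ) ∈ Δ) u v

/-- `Δ` is link-acyclic: `β_i(lk_Δ(v)) = 0` for every vertex `v` of `Δ` and every `i` -/
def IsLinkAcyclic (Δ : Finset (Finset ℕ)) : Prop :=
  ∀ v : ℕ, ({v} : Finset ℕ) ∈ Δ → ∀ i : ℤ, betti K (link Δ {v}) i = 0

/-- `Δ` is `2`-dimensional with `h`-vector `(a, b, c, e)` -/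
def hVector3 (Δ : Finset (Finset ℕ)) (a b c e : ℤ) : Prop :=
  hVec 3 Δ 0 = a ∧ hVec 3 Δ 1 = b ∧ hVec 3 Δ 2 = c ∧ hVec 3 Δ 3 = e

/-- `macaulay2 a = a^⟨2⟩`: if `a = C(b,2) + r` is the (greedy) `2`-nd Macaulay
representation (`b` maximal with `C(b,2) ≤ a`, `0 ≤ r < b`, `r = C(r,1)`), then
`a^⟨2⟩ = C(b+1,3) + C(r+1,2)`, and `0^⟨2⟩ = 0`. -/
def macaulay2 (a : ℕ) : ℕ :=
  if a = 0 then 0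
  else
    (Nat.findGreatest (fun t => t.choose 2 ≤ a) (a + 2) + 1).choose 3
      + (a - (Nat.findGreatest (fun t => t.choose 2 ≤ a) (a + 2)).choose 2 + 1).choose 2

/-- `modRep n i = ī`, the unique element of `[n] = {1,…,n}` congruent to `i` mod `n` -/
def modRep (n : ℕ) (i : ℤ) : ℕ := ((i - 1) % (n : ℤ)).toNat + 1


end

section MyHelp

variable (K : Type) [Field K]

lemma my_mem_link {Δ : Finset (Finset ℕ)} {G F : Finset ℕ} :
    G ∈ link Δ F ↔ G ∈ Δ ∧ Disjoint G F ∧ G ∪ F ∈ Δ := by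
  simp [link]

lemma my_link_empty (Δ : Finset (Finset ℕ)) : link Δ ∅ = Δ := by
  unfold link
  apply Finset.filter_true_of_mem
  intro G hG
  simp [hG]

lemma my_bdry_single (F : Finset ℕ) : bdry K (Finsupp.single F (1 : K)) =
    ∑ v ∈ F, ((-1 : K) ^ ((F.filter fun u => u < v).card)) • Finsupp.single (F.erase v) (1 : K) := by
  simp [bdry, Finsupp.lsum_single, LinearMap.toSpanSingleton_apply]

lemma my_bdry_vertex (u : ℕ) :
    bdry K (Finsupp.single ({u} : Finset ℕ) (1 : K)) = Finsupp.single (∅ : Finset ℕ) (1 : K) := by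
  rw [my_bdry_single]
  simp [Finset.filter_singleton]

lemma my_single_empty_ne_zero : (Finsupp.single (∅ : Finset ℕ) (1 : K)) ≠ 0 :=
  fun h => one_ne_zero (Finsupp.single_eq_zero.mp h)

lemma my_bdry_emptyface :
    bdry K (Finsupp.single (∅ : Finset ℕ) (1 : K)) = 0 := by
  rw [my_bdry_single]; simp

lemma my_chains_bot {Δ : Finset (Finset ℕ)} {m : ℕ} (h : facesOf Δ m = ∅) :
    chains K Δ m = ⊥ := by
  unfold chains
  rw [h]
  simp

instance my_chains_fd (Δ : Finset (Finset ℕ)) (m : ℕ) : FiniteDimensional K (chains K Δ m) :=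
  FiniteDimensional.span_of_finite K ((facesOf Δ m).finite_toSet.image _)

lemma my_chains_mono {Δ₁ Δ₂ : Finset (Finset ℕ)} (m : ℕ) (h : facesOf Δ₁ m ⊆ facesOf Δ₂ m) :
    chains K Δ₁ m ≤ chains K Δ₂ m :=
  Submodule.span_mono (Set.image_mono h)

lemma my_single_mem_chains {Δ : Finset (Finset ℕ)} {F : Finset ℕ} {m : ℕ}
    (h : F ∈ Δ) (hc : F.card = m) : Finsupp.single F (1 : K) ∈ chains K Δ m :=
  Submodule.subset_span ⟨F, by simp [facesOf, h, hc], rfl⟩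

lemma my_homDim_of_no_faces {Δ : Finset (Finset ℕ)} {m : ℕ} (h : facesOf Δ m = ∅) :
    homDim K Δ m = 0 := by
  unfold homDim
  have : chains K Δ m ⊓ LinearMap.ker (bdry K) = ⊥ := by
    rw [my_chains_bot K h]; simp
  rw [this]
  simp

lemma my_homDim_zero_eq_zero {Δ : Finset (Finset ℕ)} {u : ℕ} (hu : ({u} : Finset ℕ) ∈ Δ) :
    homDim K Δ 0 = 0 := by
  apply Nat.sub_eq_zero_of_le
  have h1 : Module.finrank K ↥(chains K Δ 0 ⊓ LinearMap.ker (bdry K)) ≤ 1 := by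
    have hle : chains K Δ 0 ⊓ LinearMap.ker (bdry K) ≤
        Submodule.span K {Finsupp.single (∅ : Finset ℕ) (1 : K)} := by
      refine le_trans inf_le_left ?_
      unfold chains
      apply Submodule.span_le.mpr
      rintro x ⟨F, hF, rfl⟩
      have hF0 : F = ∅ := by
        simp only [Finset.coe_filter, facesOf, Set.mem_setOf_eq, Finset.mem_coe,
          Finset.mem_filter] at hF
        exact Finset.card_eq_zero.mp hF.2
      subst hF0
      exact Submodule.subset_span rfl
    calc Module.finrank K ↥(chains K Δ 0 ⊓ LinearMap.ker (bdry K))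
        ≤ Module.finrank K ↥(Submodule.span K {Finsupp.single (∅ : Finset ℕ) (1 : K)}) :=
          Submodule.finrank_mono hle
      _ ≤ 1 := by
          rw [finrank_span_singleton (my_single_empty_ne_zero K)]
  refine le_trans h1 ?_
  have hmem : Finsupp.single (∅ : Finset ℕ) (1 : K) ∈ (chains K Δ 1).map (bdry K) :=
    ⟨Finsupp.single ({u} : Finset ℕ) (1 : K), my_single_mem_chains K hu (by simp),
      my_bdry_vertex K u⟩
  have hpos : 0 < Module.finrank K ↥((chains K Δ 1).map (bdry K)) := by
    apply (Module.finrank_pos_iff_exists_ne_zero (R := K) (M := ↥((chains K Δ 1).map (bdry K)))).mpr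
    refine ⟨⟨_, hmem⟩, ?_⟩
    simp only [ne_eq, Submodule.mk_eq_zero]
    exact my_single_empty_ne_zero K
  exact hpos

lemma my_facesOf_zero {Δ : Finset (Finset ℕ)} (he : (∅ : Finset ℕ) ∈ Δ) :
    facesOf Δ 0 = {∅} := by
  ext G
  simp only [facesOf, Finset.mem_filter, Finset.card_eq_zero, Finset.mem_singleton]
  constructor
  · rintro ⟨_, rfl⟩; rfl
  · rintro rfl; exact ⟨he, rfl⟩

lemma my_homDim_zero_eq_one {Δ : Finset (Finset ℕ)} (he : (∅ : Finset ℕ) ∈ Δ)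
    (h1 : facesOf Δ 1 = ∅) : homDim K Δ 0 = 1 := by
  unfold homDim
  rw [my_chains_bot K h1, Submodule.map_bot]
  have hchain : chains K Δ 0 = Submodule.span K {Finsupp.single (∅ : Finset ℕ) (1 : K)} := by
    unfold chains
    rw [my_facesOf_zero he]
    simp
  have hker : chains K Δ 0 ≤ LinearMap.ker (bdry K) := by
    rw [hchain, Submodule.span_le]
    rintro x rfl
    simp [LinearMap.mem_ker, my_bdry_emptyface]
  rw [inf_eq_left.mpr hker, hchain,
    finrank_span_singleton (my_single_empty_ne_zero K)]
  simp

lemma my_homDim_one_comparison {Δ₁ Δ₂ : Finset (Finset ℕ)}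
    (hv : facesOf Δ₁ 1 = facesOf Δ₂ 1) (he : facesOf Δ₁ 2 ⊆ facesOf Δ₂ 2)
    (h : homDim K Δ₁ 1 = 0) : homDim K Δ₂ 1 = 0 := by
  unfold homDim at h ⊢
  have hc : chains K Δ₂ 1 = chains K Δ₁ 1 := by unfold chains; rw [hv]
  rw [hc]
  apply Nat.sub_eq_zero_of_le
  refine le_trans (Nat.le_of_sub_eq_zero h) ?_
  exact Submodule.finrank_mono (Submodule.map_mono (my_chains_mono K 2 he))

end MyHelp

section MyHelp2

variable (K : Type) [Field K]

lemma my_facesOf_empty_of_card_lt {X : Finset (Finset ℕ)} {m : ℕ}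
    (h : ∀ G ∈ X, G.card < m) : facesOf X m = ∅ := by
  ext G
  simp only [facesOf, Finset.mem_filter, Finset.notMem_empty, iff_false, not_and]
  intro hG
  exact (h G hG).ne

lemma my_link_card_le {X : Finset (Finset ℕ)} (h2 : ∀ G ∈ X, G.card ≤ 2) (F : Finset ℕ) :
    ∀ G ∈ link X F, G.card + F.card ≤ 2 := by
  intro G hG
  rw [my_mem_link] at hG
  obtain ⟨_, hd, hu⟩ := hG
  have := h2 _ hu
  rwa [Finset.card_union_of_disjoint hd] at this

lemma my_CM_of_dim_one {X : Finset (Finset ℕ)}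
    (h2 : ∀ G ∈ X, G.card ≤ 2)
    (hbc : ∃ e ∈ X, e.card = 2)
    (hv : ∃ u : ℕ, ({u} : Finset ℕ) ∈ X)
    (h0 : homDim K X 1 = 0)
    (hlinkv : ∀ w : ℕ, ({w} : Finset ℕ) ∈ X → ∃ u : ℕ, ({u} : Finset ℕ) ∈ link X {w}) :
    IsCohenMacaulay K X := by
  have hdim : dimZ X = 1 := by
    have hle : X.sup Finset.card ≤ 2 := Finset.sup_le h2
    obtain ⟨e, he, hec⟩ := hbc
    have hge : 2 ≤ X.sup Finset.card := hec ▸ Finset.le_sup he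
    unfold dimZ
    omega
  intro F hF i hi
  rw [hdim] at hi
  rcases lt_or_ge (i + 1) 0 with hneg | hnn
  · unfold betti
    rw [if_neg (not_le.mpr hneg)]
  unfold betti
  rw [if_pos hnn]
  have hm : ((i + 1).toNat : ℤ) = i + 1 := Int.toNat_of_nonneg hnn
  set m := (i + 1).toNat with hmdef
  have hFc : F.card ≤ 2 := h2 F hF
  have hcases : F.card = 0 ∨ F.card = 1 ∨ F.card = 2 := by omega
  rcases hcases with h | h | h
  · -- F = ∅, threshold 1, i ≠ 1 so m ≠ 2
    have hF0 : F = ∅ := Finset.card_eq_zero.mp h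
    subst hF0
    rw [my_link_empty]
    have hm2 : m ≠ 2 := by
      intro hc
      apply hi
      rw [h]
      omega
    rcases Nat.lt_or_ge m 2 with hlt | hge
    · interval_cases m
      · obtain ⟨u, hu⟩ := hv
        exact my_homDim_zero_eq_zero K hu
      · exact h0
    · have hge3 : 3 ≤ m := by omega
      apply my_homDim_of_no_faces
      apply my_facesOf_empty_of_card_lt
      intro G hG
      have := h2 G hG
      omega
  · -- card 1, threshold 0, m ≠ 1
    obtain ⟨w, rfl⟩ := Finset.card_eq_one.mp h
    have hm1 : m ≠ 1 := by
      intro hc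
      apply hi
      rw [h]
      omega
    rcases Nat.lt_or_ge m 1 with hlt | hge
    · have hm0 : m = 0 := by omega
      rw [hm0]
      obtain ⟨u, hu⟩ := hlinkv w hF
      exact my_homDim_zero_eq_zero K hu
    · have hge2 : 2 ≤ m := by omega
      apply my_homDim_of_no_faces
      apply my_facesOf_empty_of_card_lt
      intro G hG
      have := my_link_card_le h2 _ G hG
      omega
  · -- card 2, threshold -1, m ≠ 0
    have hm0 : m ≠ 0 := by
      intro hc
      apply hi
      rw [h]
      omega
    apply my_homDim_of_no_faces
    apply my_facesOf_empty_of_card_lt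
    intro G hG
    have := my_link_card_le h2 _ G hG
    omega

end MyHelp2

section MyHelp3

variable (K : Type) [Field K]

lemma my_union_singleton (G : Finset ℕ) (a : ℕ) : G ∪ {a} = insert a G := by
  rw [Finset.union_comm, ← Finset.insert_eq]

lemma my_aux_cm (Δ Γ : Finset (Finset ℕ)) (a b c : ℕ)
    (hdc : ∀ F ∈ Δ, ∀ G ⊆ F, G ∈ Δ)
    (hab : a ≠ b) (hac : a ≠ c) (hbc : b ≠ c)
    (hsub : ∀ G ⊆ ({a, b, c} : Finset ℕ), G ≠ {a, b, c} → G ∈ Δ)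
    (hcard : ∀ G ∈ Δ, G.card ≤ 3)
    (hM : ∃ M ∈ Δ, a ∈ M ∧ M.card = 3)
    (hCM : IsCohenMacaulay K (link Δ {a}))
    (hΓ : Γ = Δ ∪ ({a, b, c} : Finset ℕ).powerset) :
    IsCohenMacaulay K (link Γ {a}) := by
  have hFcard : ({a, b, c} : Finset ℕ).card = 3 :=
    Finset.card_eq_three.mpr ⟨a, b, c, hab, hac, hbc, rfl⟩
  have hbc2 : ({b, c} : Finset ℕ).card = 2 := Finset.card_pair hbc
  have hbcsub : ({b, c} : Finset ℕ) ⊆ ({a, b, c} : Finset ℕ) := by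
    intro x hx
    simp only [Finset.mem_insert, Finset.mem_singleton] at hx ⊢
    tauto
  have hbcne : ({b, c} : Finset ℕ) ≠ ({a, b, c} : Finset ℕ) := by
    intro h
    rw [h, hFcard] at hbc2
    omega
  have hbcΔ : ({b, c} : Finset ℕ) ∈ Δ := hsub _ hbcsub hbcne
  have hmemΔ : ∀ G ⊆ ({a, b, c} : Finset ℕ), G.card ≤ 2 → G ∈ Δ := by
    intro G hG hGc
    refine hsub G hG fun h => ?_
    rw [h, hFcard] at hGc
    omega
  have habΔ : ({a, b} : Finset ℕ) ∈ Δ := by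
    apply hmemΔ
    · intro x hx
      simp only [Finset.mem_insert, Finset.mem_singleton] at hx ⊢
      tauto
    · exact le_of_eq (Finset.card_pair hab)
  have haΔ : ({a} : Finset ℕ) ∈ Δ := hdc _ habΔ _ (by simp)
  have hbΔ : ({b} : Finset ℕ) ∈ Δ := hdc _ habΔ _ (by simp)
  have heΔ : (∅ : Finset ℕ) ∈ Δ := hdc _ habΔ _ (by simp)
  -- the key structural identity
  have key : link Γ {a} = insert ({b, c} : Finset ℕ) (link Δ {a}) := by
    subst hΓ
    ext G
    rw [Finset.mem_insert, my_mem_link, my_mem_link]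
    constructor
    · rintro ⟨hGΓ, hd, hu⟩
      by_cases hG : G = {b, c}
      · exact Or.inl hG
      right
      have haG : a ∉ G := by
        rw [Finset.disjoint_singleton_right] at hd
        exact hd
      have huΔ : G ∪ {a} ∈ Δ := by
        rcases Finset.mem_union.mp hu with h | h
        · exact h
        · rw [Finset.mem_powerset] at h
          apply hsub _ h
          intro heq
          apply hG
          apply Finset.Subset.antisymm
          · intro x hx
            have hxF : x ∈ ({a, b, c} : Finset ℕ) := heq ▸ Finset.mem_union_left _ hx
            have hxa : x ≠ a := fun h' => haG (h' ▸ hx)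
            simp only [Finset.mem_insert, Finset.mem_singleton] at hxF ⊢
            tauto
          · intro x hx
            have hx3 : x ∈ ({a, b, c} : Finset ℕ) := by
              simp only [Finset.mem_insert, Finset.mem_singleton] at hx ⊢
              tauto
            rw [← heq] at hx3
            rcases Finset.mem_union.mp hx3 with h' | h'
            · exact h'
            · exfalso
              rw [Finset.mem_singleton] at h'
              simp only [Finset.mem_insert, Finset.mem_singleton] at hx
              rcases hx with rfl | rfl
              · exact hab h'.symm
              · exact hac h'.symm
      exact ⟨hdc _ huΔ _ Finset.subset_union_left, hd, huΔ⟩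
    · rintro (rfl | ⟨hGΔ, hd, hu⟩)
      · refine ⟨Finset.mem_union_left _ hbcΔ, ?_, ?_⟩
        · rw [Finset.disjoint_singleton_right]
          simp only [Finset.mem_insert, Finset.mem_singleton]
          push_neg
          exact ⟨hab, hac⟩
        · apply Finset.mem_union_right
          rw [Finset.mem_powerset, my_union_singleton]
      · exact ⟨Finset.mem_union_left _ hGΔ, hd, Finset.mem_union_left _ hu⟩
  set L := link Δ {a} with hLdef
  -- cardinality bound for links
  have hL2 : ∀ G ∈ L, G.card ≤ 2 := by
    intro G hG
    rw [hLdef, my_mem_link] at hG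
    obtain ⟨_, hd, hu⟩ := hG
    have := hcard _ hu
    rw [Finset.card_union_of_disjoint hd, Finset.card_singleton] at this
    omega
  have hL'2 : ∀ G ∈ link Γ {a}, G.card ≤ 2 := by
    intro G hG
    rw [key, Finset.mem_insert] at hG
    rcases hG with rfl | hG
    · exact le_of_eq hbc2
    · exact hL2 G hG
  -- membership facts
  have hbL : ({b} : Finset ℕ) ∈ L := by
    rw [hLdef, my_mem_link]
    refine ⟨hbΔ, ?_, ?_⟩
    · rw [Finset.disjoint_singleton_right, Finset.mem_singleton]
      exact hab
    · rw [my_union_singleton]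
      exact habΔ
  have heL : (∅ : Finset ℕ) ∈ L := by
    rw [hLdef, my_mem_link]
    refine ⟨heΔ, by simp, ?_⟩
    rw [Finset.empty_union]
    exact haΔ
  have hdimL : dimZ L = 1 := by
    obtain ⟨M, hMΔ, haM, hM3⟩ := hM
    have heM : M.erase a ∈ L := by
      rw [hLdef, my_mem_link]
      refine ⟨hdc _ hMΔ _ (Finset.erase_subset _ _), ?_, ?_⟩
      · rw [Finset.disjoint_singleton_right]
        exact Finset.notMem_erase _ _
      · rw [my_union_singleton, Finset.insert_erase haM]
        exact hMΔ
    have hec : (M.erase a).card = 2 := by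
      rw [Finset.card_erase_of_mem haM, hM3]
    have hge : 2 ≤ L.sup Finset.card := hec ▸ Finset.le_sup heM
    have hle : L.sup Finset.card ≤ 2 := Finset.sup_le hL2
    unfold dimZ
    omega
  -- connectivity of L
  have h0L : homDim K L 1 = 0 := by
    have := hCM ∅ heL 0 (by rw [hdimL]; norm_num)
    rw [my_link_empty] at this
    unfold betti at this
    rw [if_pos (by norm_num)] at this
    simpa using this
  -- connectivity of L'
  have h0L' : homDim K (link Γ {a}) 1 = 0 := by
    apply my_homDim_one_comparison K (Δ₁ := L)
    · rw [key]
      ext G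
      simp only [facesOf, Finset.mem_filter, Finset.mem_insert]
      constructor
      · rintro ⟨hG, hGc⟩
        exact ⟨Or.inr hG, hGc⟩
      · rintro ⟨rfl | hG, hGc⟩
        · rw [hbc2] at hGc
          omega
        · exact ⟨hG, hGc⟩
    · rw [key]
      exact Finset.filter_subset_filter _ (Finset.subset_insert _ _)
    · exact h0L
  -- every vertex of L' is in an edge
  have hlinkv : ∀ w : ℕ, ({w} : Finset ℕ) ∈ link Γ {a} →
      ∃ u : ℕ, ({u} : Finset ℕ) ∈ link (link Γ {a}) {w} := by
    intro w hw
    have hwL : ({w} : Finset ℕ) ∈ L := by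
      rw [key, Finset.mem_insert] at hw
      rcases hw with h | h
      · exfalso
        have := congrArg Finset.card h
        rw [Finset.card_singleton, hbc2] at this
        omega
      · exact h
    have h0 := hCM {w} hwL (-1) (by rw [hdimL, Finset.card_singleton]; norm_num)
    unfold betti at h0
    rw [if_pos (by norm_num)] at h0
    simp only [show ((-1 : ℤ) + 1).toNat = 0 by norm_num] at h0
    have heLw : (∅ : Finset ℕ) ∈ link L {w} := by
      rw [my_mem_link]
      refine ⟨heL, by simp, ?_⟩
      rw [Finset.empty_union]
      exact hwL
    have hne : (facesOf (link L {w}) 1).Nonempty := by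
      rw [Finset.nonempty_iff_ne_empty]
      intro hemp
      rw [my_homDim_zero_eq_one K heLw hemp] at h0
      exact one_ne_zero h0
    obtain ⟨G, hG⟩ := hne
    rw [facesOf, Finset.mem_filter] at hG
    obtain ⟨hGl, hGc⟩ := hG
    obtain ⟨u, rfl⟩ := Finset.card_eq_one.mp hGc
    refine ⟨u, ?_⟩
    rw [my_mem_link] at hGl ⊢
    obtain ⟨h1, h2, h3⟩ := hGl
    exact ⟨by rw [key]; exact Finset.mem_insert_of_mem h1, h2,
      by rw [key]; exact Finset.mem_insert_of_mem h3⟩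
  apply my_CM_of_dim_one K hL'2
  · exact ⟨{b, c}, by rw [key]; exact Finset.mem_insert_self _ _, hbc2⟩
  · exact ⟨b, by rw [key]; exact Finset.mem_insert_of_mem hbL⟩
  · exact h0L'
  · exact hlinkv

end MyHelp3

/-- **Lemma 2.5.** Let `Δ` be a `2`-dimensional Buchsbaum complex, `F = {a,b,c}`,
and `Γ = Δ ∪ ⟨F⟩`. If `Δ ∩ ⟨F⟩ = ({a, b} : Finset ℕ).powerset ∪ ({a, c} : Finset ℕ).powerset ∪ ({b, c} : Finset ℕ).powerset` then `Γ` is Buchsbaum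
and the `h`-vector changes as stated. -/
theorem stmt8 (K : Type) [Field K] (nn : ℕ) (Δ Γ : Finset (Finset ℕ)) (a b c : ℕ)
    (hΔ : IsComplexOn nn Δ) (hdim : dimZ Δ = 2) (hB : IsBuchsbaum K Δ)
    (hab : a ≠ b) (hac : a ≠ c) (hbc : b ≠ c)
    (hΓ : Γ = Δ ∪ ({a, b, c} : Finset ℕ).powerset)
    (hcap : Δ ∩ ({a, b, c} : Finset ℕ).powerset = ({a, b} : Finset ℕ).powerset ∪ ({a, c} : Finset ℕ).powerset ∪ ({b, c} : Finset ℕ).powerset) :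
    IsBuchsbaum K Γ ∧ hVec 3 Γ 0 = hVec 3 Δ 0 ∧
      hVec 3 Γ 1 = hVec 3 Δ 1 ∧
      hVec 3 Γ 2 = hVec 3 Δ 2 ∧
      hVec 3 Γ 3 = hVec 3 Δ 3 + 1 := by
  have hdc := hΔ.1
  have hFcard : ({a, b, c} : Finset ℕ).card = 3 :=
    Finset.card_eq_three.mpr ⟨a, b, c, hab, hac, hbc, rfl⟩
  have hsupΔ : Δ.sup Finset.card = 3 := by
    unfold dimZ at hdim
    omega
  have hcardΔ : ∀ G ∈ Δ, G.card ≤ 3 := fun G hG => hsupΔ ▸ Finset.le_sup hG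
  -- every proper subset of {a,b,c} lies in Δ
  have hsub : ∀ G ⊆ ({a, b, c} : Finset ℕ), G ≠ ({a, b, c} : Finset ℕ) → G ∈ Δ := by
    intro G hG hne
    have hmem : G ∈ Δ ∩ ({a, b, c} : Finset ℕ).powerset := by
      rw [hcap]
      have hmiss : ∃ x ∈ ({a, b, c} : Finset ℕ), x ∉ G := by
        by_contra h
        push_neg at h
        exact hne (Finset.Subset.antisymm hG fun x hx => h x hx)
      obtain ⟨x, hx3, hxG⟩ := hmiss
      have hsubaux : ∀ y ∈ G, y ∈ ({a, b, c} : Finset ℕ) ∧ y ≠ x :=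
        fun y hy => ⟨hG hy, fun h => hxG (h ▸ hy)⟩
      simp only [Finset.mem_insert, Finset.mem_singleton] at hx3
      rcases hx3 with rfl | rfl | rfl
      · apply Finset.mem_union_right
        rw [Finset.mem_powerset]
        intro y hy
        obtain ⟨hy3, hyx⟩ := hsubaux y hy
        simp only [Finset.mem_insert, Finset.mem_singleton] at hy3 ⊢
        tauto
      · apply Finset.mem_union_left
        apply Finset.mem_union_right
        rw [Finset.mem_powerset]
        intro y hy
        obtain ⟨hy3, hyx⟩ := hsubaux y hy
        simp only [Finset.mem_insert, Finset.mem_singleton] at hy3 ⊢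
        tauto
      · apply Finset.mem_union_left
        apply Finset.mem_union_left
        rw [Finset.mem_powerset]
        intro y hy
        obtain ⟨hy3, hyx⟩ := hsubaux y hy
        simp only [Finset.mem_insert, Finset.mem_singleton] at hy3 ⊢
        tauto
    exact (Finset.mem_inter.mp hmem).1
  -- {a,b,c} is not a face of Δ
  have hFnot : ({a, b, c} : Finset ℕ) ∉ Δ := by
    intro h
    have hmem : ({a, b, c} : Finset ℕ) ∈ Δ ∩ ({a, b, c} : Finset ℕ).powerset :=
      Finset.mem_inter.mpr ⟨h, Finset.mem_powerset.mpr (Finset.Subset.refl _)⟩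
    rw [hcap] at hmem
    rcases Finset.mem_union.mp hmem with hmem | hmem
    · rcases Finset.mem_union.mp hmem with hmem | hmem
      · have := Finset.card_le_card (Finset.mem_powerset.mp hmem)
        rw [hFcard, Finset.card_pair hab] at this
        omega
      · have := Finset.card_le_card (Finset.mem_powerset.mp hmem)
        rw [hFcard, Finset.card_pair hac] at this
        omega
    · have := Finset.card_le_card (Finset.mem_powerset.mp hmem)
      rw [hFcard, Finset.card_pair hbc] at this
      omega
  -- every vertex of Δ lies in a facet of cardinality 3
  have hfacet : ∀ v : ℕ, ({v} : Finset ℕ) ∈ Δ → ∃ M ∈ Δ, v ∈ M ∧ M.card = 3 := by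
    intro v hv
    obtain ⟨M, hM, hmax⟩ := Finset.exists_max_image (Δ.filter fun G => ({v} : Finset ℕ) ⊆ G)
      Finset.card ⟨{v}, Finset.mem_filter.mpr ⟨hv, Finset.Subset.refl _⟩⟩
    rw [Finset.mem_filter] at hM
    refine ⟨M, hM.1, Finset.singleton_subset_iff.mp hM.2, ?_⟩
    have hpM : M.card = Δ.sup Finset.card := by
      apply hB.1 M hM.1
      intro H hH hMH
      apply Finset.eq_of_subset_of_card_le hMH
      exact hmax H (Finset.mem_filter.mpr ⟨hH, hM.2.trans hMH⟩)
    rw [hpM, hsupΔ]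
  -- vertices of {a,b,c} are in Δ
  have haΔ : ({a} : Finset ℕ) ∈ Δ := by
    apply hsub
    · simp
    · intro h
      have := congrArg Finset.card h
      rw [Finset.card_singleton, hFcard] at this
      omega
  have hbΔ : ({b} : Finset ℕ) ∈ Δ := by
    apply hsub
    · simp
    · intro h
      have := congrArg Finset.card h
      rw [Finset.card_singleton, hFcard] at this
      omega
  have hcΔ : ({c} : Finset ℕ) ∈ Δ := by
    apply hsub
    · simp
    · intro h
      have := congrArg Finset.card h
      rw [Finset.card_singleton, hFcard] at this
      omega
  -- purity of Γ
  have hsupΓ : Γ.sup Finset.card = 3 := by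
    apply le_antisymm
    · apply Finset.sup_le
      intro G hG
      rw [hΓ, Finset.mem_union] at hG
      rcases hG with hG | hG
      · exact hcardΔ G hG
      · have := Finset.card_le_card (Finset.mem_powerset.mp hG)
        omega
    · have hmem : ({a, b, c} : Finset ℕ) ∈ Γ := by
        rw [hΓ]
        exact Finset.mem_union_right _ (Finset.mem_powerset.mpr (Finset.Subset.refl _))
      exact hFcard ▸ Finset.le_sup hmem
  have hpure : IsPure Γ := by
    intro G hG hmax
    rw [hsupΓ]
    rw [hΓ, Finset.mem_union] at hG
    rcases hG with hG | hG
    · have : G.card = Δ.sup Finset.card := by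
        apply hB.1 G hG
        intro H hH hGH
        exact hmax H (by rw [hΓ]; exact Finset.mem_union_left _ hH) hGH
      rw [this, hsupΔ]
    · rw [Finset.mem_powerset] at hG
      have := hmax ({a, b, c} : Finset ℕ)
        (by rw [hΓ]; exact Finset.mem_union_right _ (Finset.mem_powerset.mpr (Finset.Subset.refl _))) hG
      rw [this, hFcard]
  -- Cohen-Macaulayness of all vertex links
  have hCMall : ∀ v : ℕ, ({v} : Finset ℕ) ∈ Γ → IsCohenMacaulay K (link Γ {v}) := by
    intro v hv
    by_cases hvF : v ∈ ({a, b, c} : Finset ℕ)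
    · simp only [Finset.mem_insert, Finset.mem_singleton] at hvF
      rcases hvF with rfl | rfl | rfl
      · exact my_aux_cm K Δ Γ v b c hdc hab hac hbc hsub hcardΔ (hfacet v haΔ) (hB.2 v haΔ) hΓ
      · have heq : ({v, a, c} : Finset ℕ) = ({a, v, c} : Finset ℕ) := by
          ext x
          simp only [Finset.mem_insert, Finset.mem_singleton]
          tauto
        refine my_aux_cm K Δ Γ v a c hdc (Ne.symm hab) hbc hac ?_ hcardΔ (hfacet v hbΔ)
          (hB.2 v hbΔ) ?_
        · rw [heq]
          exact hsub
        · rw [heq]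
          exact hΓ
      · have heq : ({v, a, b} : Finset ℕ) = ({a, b, v} : Finset ℕ) := by
          ext x
          simp only [Finset.mem_insert, Finset.mem_singleton]
          tauto
        refine my_aux_cm K Δ Γ v a b hdc (Ne.symm hac) (Ne.symm hbc) hab ?_ hcardΔ
          (hfacet v hcΔ) (hB.2 v hcΔ) ?_
        · rw [heq]
          exact hsub
        · rw [heq]
          exact hΓ
    · have hvΔ : ({v} : Finset ℕ) ∈ Δ := by
        rw [hΓ, Finset.mem_union] at hv
        rcases hv with hv | hv
        · exact hv
        · exact absurd (Finset.mem_powerset.mp hv (Finset.mem_singleton_self v)) hvF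
      have hlink : link Γ {v} = link Δ {v} := by
        ext G
        rw [my_mem_link, my_mem_link]
        constructor
        · rintro ⟨hGΓ, hd, hu⟩
          have huΔ : G ∪ {v} ∈ Δ := by
            rw [hΓ, Finset.mem_union] at hu
            rcases hu with h | h
            · exact h
            · exact absurd (Finset.mem_powerset.mp h
                (Finset.mem_union_right _ (Finset.mem_singleton_self v))) hvF
          exact ⟨hdc _ huΔ _ Finset.subset_union_left, hd, huΔ⟩
        · rintro ⟨h1, h2, h3⟩
          rw [hΓ]
          exact ⟨Finset.mem_union_left _ h1, h2, Finset.mem_union_left _ h3⟩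
      rw [hlink]
      exact hB.2 v hvΔ
  -- the f-vector facts
  have hfaces12 : ∀ j, 1 ≤ j → j ≤ 2 → facesOf Γ j = facesOf Δ j := by
    intro j h1 h2
    ext G
    simp only [facesOf, Finset.mem_filter, hΓ, Finset.mem_union, Finset.mem_powerset]
    constructor
    · rintro ⟨hG | hG, hc⟩
      · exact ⟨hG, hc⟩
      · refine ⟨hsub G hG fun h => ?_, hc⟩
        rw [h, hFcard] at hc
        omega
    · rintro ⟨hG, hc⟩
      exact ⟨Or.inl hG, hc⟩
  have hfaces3 : facesOf Γ 3 = insert ({a, b, c} : Finset ℕ) (facesOf Δ 3) := by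
    ext G
    simp only [facesOf, Finset.mem_filter, Finset.mem_insert, hΓ, Finset.mem_union,
      Finset.mem_powerset]
    constructor
    · rintro ⟨hG | hG, hc⟩
      · exact Or.inr ⟨hG, hc⟩
      · left
        exact Finset.eq_of_subset_of_card_le hG (by rw [hFcard, hc])
    · rintro (rfl | ⟨hG, hc⟩)
      · exact ⟨Or.inr (Finset.Subset.refl _), hFcard⟩
      · exact ⟨Or.inl hG, hc⟩
  have hf0 : fVec Γ 0 = fVec Δ 0 := rfl
  have hf1 : fVec Γ 1 = fVec Δ 1 := by
    simp only [fVec, if_neg (one_ne_zero)]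
    rw [hfaces12 1 le_rfl (by norm_num)]
  have hf2 : fVec Γ 2 = fVec Δ 2 := by
    simp only [fVec, if_neg (two_ne_zero)]
    rw [hfaces12 2 (by norm_num) le_rfl]
  have hf3 : fVec Γ 3 = fVec Δ 3 + 1 := by
    simp only [fVec, if_neg (three_ne_zero)]
    rw [hfaces3, Finset.card_insert_of_notMem]
    · push_cast
      ring
    · intro h
      exact hFnot (Finset.mem_filter.mp h).1
  refine ⟨⟨hpure, hCMall⟩, ?_, ?_, ?_, ?_⟩
  · simp only [hVec, Finset.sum_range_succ, Finset.sum_range_zero, hf0]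
  · simp only [hVec, Finset.sum_range_succ, Finset.sum_range_zero, hf0, hf1]
  · simp only [hVec, Finset.sum_range_succ, Finset.sum_range_zero, hf0, hf1, hf2]
  · simp only [hVec, Finset.sum_range_succ, Finset.sum_range_zero, hf0, hf1, hf2, hf3,
      Nat.choose_self, Nat.cast_one]
    ring
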